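/- Let A, B ∈ ℂ^{n×n} with A^⊤ and B upper triangular, with diagonal entries a_{ii} = (A)_{ii} and b_{ii} = (B)_{ii} satisfying: a_{11} = b_{11}, and for all (i,j) ≠ (1,1) with the property required for a simple reciprocal-free structure, a_{ii} b_{jj} ≠ 1 unless i = j = 1 (i.e., 1 is a simple eigenvalue of the pencil A^⊤ - λB and the remaining spectrum is reciprocal free). Let C ∈ ℂ^{n×n} and Z = [[0, B],[A, -C]]. Then the null space of Z^⊤ - Z has dimension exactly 2. -/

import Mathlib

open Matrix

/-- Kernel of an upper triangular matrix whose diagonal is nonzero except possibly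
at index 0 is supported at index 0. -/
lemma upper_kernel_aux {n : ℕ} (M : Matrix (Fin n) (Fin n) ℂ)
    (htri : ∀ i j : Fin n, j < i → M i j = 0)
    (hd : ∀ i : Fin n, i.val ≠ 0 → M i i ≠ 0)
    (y : Fin n → ℂ) (hy : M.mulVec y = 0) :
    ∀ i : Fin n, i.val ≠ 0 → y i = 0 := by
  suffices key : ∀ k, ∀ i : Fin n, n - i.val ≤ k → i.val ≠ 0 → y i = 0 by
    exact fun i hi => key n i (by omega) hi
  intro k
  induction k with
  | zero => intro i hi; exact fun _ => absurd i.isLt (by omega)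
  | succ k ih =>
    intro i hi h0
    have h : ∑ j, M i j * y j = 0 := by
      simpa [Matrix.mulVec, dotProduct] using congrFun hy i
    have hsum : ∑ j, M i j * y j = M i i * y i := by
      refine Finset.sum_eq_single i (fun j _ hj => ?_) (by simp)
      rcases lt_or_gt_of_ne hj with hlt | hgt
      · simp [htri i j hlt]
      · have hij : i.val < j.val := hgt
        have : y j = 0 := ih j (by omega) (by omega)
        simp [this]
    rw [hsum] at h
    exact (mul_eq_zero.mp h).resolve_left (hd i h0)

/-- Uniqueness for lower triangular systems: if `L x = 0` and the 0-th coordinate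
of `x` vanishes, then `x = 0`. -/
lemma lower_unique_aux {n : ℕ} (L : Matrix (Fin n) (Fin n) ℂ)
    (htri : ∀ i j : Fin n, i < j → L i j = 0)
    (hd : ∀ i : Fin n, i.val ≠ 0 → L i i ≠ 0)
    (x : Fin n → ℂ) (hx : L.mulVec x = 0) (h0 : ∀ i : Fin n, i.val = 0 → x i = 0) :
    x = 0 := by
  suffices key : ∀ k, ∀ i : Fin n, i.val ≤ k → x i = 0 by
    exact funext fun i => key i.val i le_rfl
  intro k
  induction k with
  | zero => intro i hi; exact h0 i (by omega)
  | succ k ih =>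
    intro i hi
    by_cases hik : i.val ≤ k
    · exact ih i hik
    have hival : i.val = k + 1 := by omega
    have h : ∑ j, L i j * x j = 0 := by
      simpa [Matrix.mulVec, dotProduct] using congrFun hx i
    have hsum : ∑ j, L i j * x j = L i i * x i := by
      refine Finset.sum_eq_single i (fun j _ hj => ?_) (by simp)
      rcases lt_or_gt_of_ne hj with hlt | hgt
      · have : x j = 0 := ih j (by have : j.val < i.val := hlt; omega)
        simp [this]
      · simp [htri i j hgt]
    rw [hsum] at h
    have := (mul_eq_zero.mp h).resolve_left (hd i (by omega))
    exact this

/-- Solvability for lower triangular systems with zero (0,0) entry: if `c` vanishes at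
index 0, we can solve `L x = c` with `x 0 = s`. -/
lemma lower_solve_aux {n : ℕ} (L : Matrix (Fin n) (Fin n) ℂ)
    (htri : ∀ i j : Fin n, i < j → L i j = 0)
    (hd : ∀ i : Fin n, i.val ≠ 0 → L i i ≠ 0)
    (hd0 : ∀ i : Fin n, i.val = 0 → L i i = 0)
    (c : Fin n → ℂ) (hc : ∀ i : Fin n, i.val = 0 → c i = 0) (s : ℂ) :
    ∃ x : Fin n → ℂ, L.mulVec x = c ∧ ∀ i : Fin n, i.val = 0 → x i = s := by
  -- row 0 of L is identically 0
  have hrow0 : ∀ (x : Fin n → ℂ) (i : Fin n), i.val = 0 → L.mulVec x i = 0 := by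
    intro x i hi
    have : ∑ j, L i j * x j = 0 := by
      refine Finset.sum_eq_zero fun j _ => ?_
      by_cases hij : j = i
      · subst hij; simp [hd0 j hi]
      · have : i < j := by
          have : j.val ≠ i.val := fun h => hij (Fin.ext h)
          exact Fin.lt_def.mpr (by omega)
        simp [htri i j this]
    simpa [Matrix.mulVec, dotProduct] using this
  -- the auxiliary linear map
  let ψ : (Fin n → ℂ) →ₗ[ℂ] (Fin n → ℂ) :=
    { toFun := fun x i => if i.val = 0 then x i else L.mulVec x i
      map_add' := by
        intro a b; funext i
        by_cases h : i.val = 0 <;> simp [h, Matrix.mulVec_add]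
      map_smul' := by
        intro r a; funext i
        by_cases h : i.val = 0 <;> simp [h, Matrix.mulVec_smul] }
  have hψ : ∀ (x : Fin n → ℂ) (i : Fin n),
      ψ x i = if i.val = 0 then x i else L.mulVec x i := fun _ _ => rfl
  have hinj : Function.Injective ψ := by
    rw [injective_iff_map_eq_zero]
    intro x hx
    have hx0 : ∀ i : Fin n, i.val = 0 → x i = 0 := by
      intro i hi
      have := congrFun hx i
      rw [hψ, if_pos hi] at this; exact this
    have hLx : L.mulVec x = 0 := by
      funext i
      by_cases hi : i.val = 0
      · simp [hrow0 x i hi]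
      · have := congrFun hx i
        rw [hψ, if_neg hi] at this; simpa using this
    exact lower_unique_aux L htri hd x hLx hx0
  have hsurj : Function.Surjective ψ := LinearMap.injective_iff_surjective.mp hinj
  obtain ⟨x, hx⟩ := hsurj (fun i => if i.val = 0 then s else c i)
  refine ⟨x, ?_, ?_⟩
  · funext i
    by_cases hi : i.val = 0
    · rw [hrow0 x i hi, hc i hi]
    · have := congrFun hx i
      rw [hψ, if_neg hi] at this
      simpa [hi] using this
  · intro i hi
    have := congrFun hx i
    rw [hψ, if_pos hi] at this
    simpa [hi] using this

/-- If `Aᵀ` and `B` are upper triangular with `a₁₁ = b₁₁ ≠ 0`, `1` a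
simple eigenvalue of the pencil `Aᵀ - λB` and the remaining spectrum reciprocal free
(encoded on the diagonal entries: `aᵢᵢ aⱼⱼ ≠ bᵢᵢ bⱼⱼ` unless `i = j = 1`), then for
`Z = [[0, B],[A, -C]]` the null space of `Zᵀ - Z` has dimension exactly `2`. -/
theorem nullity_palindromic_critical
    (n : ℕ) (hn : 0 < n) (A B C : Matrix (Fin n) (Fin n) ℂ)
    (hA : (Aᵀ).BlockTriangular (id : Fin n → Fin n))
    (hB : B.BlockTriangular (id : Fin n → Fin n))
    (h11 : A ⟨0, hn⟩ ⟨0, hn⟩ = B ⟨0, hn⟩ ⟨0, hn⟩)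
    (h11ne : A ⟨0, hn⟩ ⟨0, hn⟩ ≠ 0)
    (hrf : ∀ i j : Fin n, ¬(i = ⟨0, hn⟩ ∧ j = ⟨0, hn⟩) →
      A i i * A j j ≠ B i i * B j j)
    (Z : Matrix (Fin n ⊕ Fin n) (Fin n ⊕ Fin n) ℂ)
    (hZ : Z = fromBlocks 0 B A (-C)) :
    Module.finrank ℂ (LinearMap.ker (Zᵀ - Z).mulVecLin) = 2 := by
  subst hZ
  set i0 : Fin n := ⟨0, hn⟩ with hi0
  set M : Matrix (Fin n) (Fin n) ℂ := Aᵀ - B with hM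
  have htriM : ∀ i j : Fin n, j < i → M i j = 0 := by
    intro i j h
    have h1 : Aᵀ i j = 0 := hA (show (id j : Fin n) < id i from h)
    have h2 : B i j = 0 := hB (show (id j : Fin n) < id i from h)
    have h1' : A j i = 0 := h1
    simp [hM, Matrix.sub_apply, h1', h2]
  have hd0M : ∀ i : Fin n, i.val = 0 → M i i = 0 := by
    intro i hi
    have : i = i0 := Fin.ext hi
    subst this
    simp [hM, Matrix.sub_apply, Matrix.transpose_apply, h11]
  have hdM : ∀ i : Fin n, i.val ≠ 0 → M i i ≠ 0 := by
    intro i hi hcon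
    have hAB : A i i = B i i := by
      have : A i i - B i i = 0 := by
        simpa [hM, Matrix.sub_apply, Matrix.transpose_apply] using hcon
      linear_combination this
    exact hrf i i (fun ⟨h1, _⟩ => hi (by rw [h1])) (by rw [hAB])
  set E : Matrix (Fin n) (Fin n) ℂ := C - Cᵀ with hE
  have hW : (fromBlocks 0 B A (-C))ᵀ - fromBlocks 0 B A (-C)
      = fromBlocks 0 M (-Mᵀ) E := by
    rw [Matrix.fromBlocks_transpose]
    ext (i | i) (j | j) <;>
      simp [hM, hE, Matrix.sub_apply, Matrix.transpose_apply, Matrix.neg_apply] <;> ring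
  rw [hW]
  -- characterize the kernel
  have hmem : ∀ v : (Fin n ⊕ Fin n) → ℂ,
      (fromBlocks 0 M (-Mᵀ) E).mulVec v = 0 ↔
      (M.mulVec (v ∘ Sum.inr) = 0 ∧
        Mᵀ.mulVec (v ∘ Sum.inl) = E.mulVec (v ∘ Sum.inr)) := by
    intro v
    have hv : v = Sum.elim (v ∘ Sum.inl) (v ∘ Sum.inr) := by
      funext k; cases k <;> rfl
    constructor
    · intro h
      rw [hv, Matrix.fromBlocks_mulVec] at h
      have h1 := congrFun h
      constructor
      · funext i
        simpa [Matrix.zero_mulVec] using h1 (Sum.inl i)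
      · funext i
        have := h1 (Sum.inr i)
        simp [Matrix.neg_mulVec] at this
        linear_combination -this
    · rintro ⟨h1, h2⟩
      rw [hv, Matrix.fromBlocks_mulVec]
      funext k
      cases k with
      | inl i => simpa [Matrix.zero_mulVec] using congrFun h1 i
      | inr i =>
        have := congrFun h2 i
        simp [Matrix.neg_mulVec]
        linear_combination -this
  set K := LinearMap.ker (fromBlocks 0 M (-Mᵀ) E).mulVecLin with hK
  have hmemK : ∀ v : (Fin n ⊕ Fin n) → ℂ, v ∈ K ↔
      (M.mulVec (v ∘ Sum.inr) = 0 ∧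
        Mᵀ.mulVec (v ∘ Sum.inl) = E.mulVec (v ∘ Sum.inr)) := by
    intro v
    rw [hK, LinearMap.mem_ker, Matrix.mulVecLin_apply]
    exact hmem v
  let p : ((Fin n ⊕ Fin n) → ℂ) →ₗ[ℂ] ℂ × ℂ :=
    (LinearMap.proj (Sum.inl i0)).prod (LinearMap.proj (Sum.inr i0))
  let φ : K →ₗ[ℂ] ℂ × ℂ := p ∘ₗ K.subtype
  have hφ : ∀ v : K, φ v = ((v : (Fin n ⊕ Fin n) → ℂ) (Sum.inl i0),
      (v : (Fin n ⊕ Fin n) → ℂ) (Sum.inr i0)) := fun _ => rfl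
  have htriMT : ∀ i j : Fin n, i < j → Mᵀ i j = 0 := fun i j h => htriM j i h
  have hdMT : ∀ i : Fin n, i.val ≠ 0 → Mᵀ i i ≠ 0 := by
    intro i hi; simpa [Matrix.transpose_apply] using hdM i hi
  have hinj : Function.Injective φ := by
    rw [injective_iff_map_eq_zero]
    intro v hv0
    obtain ⟨h1, h2⟩ := (hmemK v).mp v.2
    have hv0' : (v : (Fin n ⊕ Fin n) → ℂ) (Sum.inl i0) = 0 ∧
        (v : (Fin n ⊕ Fin n) → ℂ) (Sum.inr i0) = 0 := by
      have := hφ v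
      rw [hv0] at this
      exact ⟨(Prod.mk.injEq _ _ _ _ ▸ this.symm).1, (Prod.mk.injEq _ _ _ _ ▸ this.symm).2⟩
    have hy : (v : (Fin n ⊕ Fin n) → ℂ) ∘ Sum.inr = 0 := by
      funext j
      by_cases hj : j.val = 0
      · have : j = i0 := Fin.ext hj
        subst this
        exact hv0'.2
      · exact upper_kernel_aux M htriM hdM _ h1 j hj
    rw [hy, Matrix.mulVec_zero] at h2
    have hx : (v : (Fin n ⊕ Fin n) → ℂ) ∘ Sum.inl = 0 := by
      refine lower_unique_aux Mᵀ htriMT hdMT _ h2 ?_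
      intro i hi
      have : i = i0 := Fin.ext hi
      subst this
      exact hv0'.1
    apply Subtype.ext
    funext k
    cases k with
    | inl a => exact congrFun hx a
    | inr a => exact congrFun hy a
  have hsurj : Function.Surjective φ := by
    rintro ⟨s, t⟩
    set y : Fin n → ℂ := fun j => if j.val = 0 then t else 0 with hyDef
    have hy0 : M.mulVec y = 0 := by
      funext i
      have : ∑ j, M i j * y j = 0 := by
        refine Finset.sum_eq_zero fun j _ => ?_
        by_cases hj : j.val = 0
        · by_cases hij : i = j
          · subst hij; simp [hd0M i hj]
          · have : j < i := by
              have : i.val ≠ j.val := fun h => hij (Fin.ext h)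
              exact Fin.lt_def.mpr (by omega)
            simp [htriM i j this]
        · simp [hyDef, hj]
      simpa [Matrix.mulVec, dotProduct] using this
    set c : Fin n → ℂ := E.mulVec y with hcDef
    have hc : ∀ i : Fin n, i.val = 0 → c i = 0 := by
      intro i hi
      have hii : i = i0 := Fin.ext hi
      subst hii
      have : ∑ j, E i0 j * y j = 0 := by
        refine Finset.sum_eq_zero fun j _ => ?_
        by_cases hj : j.val = 0
        · have : j = i0 := Fin.ext hj
          subst this
          simp [hE, Matrix.sub_apply, Matrix.transpose_apply]
        · simp [hyDef, hj]
      simpa [hcDef, Matrix.mulVec, dotProduct] using this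
    have hd0MT : ∀ i : Fin n, i.val = 0 → Mᵀ i i = 0 := by
      intro i hi; simpa [Matrix.transpose_apply] using hd0M i hi
    obtain ⟨x, hx1, hx2⟩ := lower_solve_aux Mᵀ htriMT hdMT hd0MT c hc s
    have hmemv : Sum.elim x y ∈ K := by
      rw [hmemK]
      constructor
      · simpa using hy0
      · simpa using hx1
    refine ⟨⟨Sum.elim x y, hmemv⟩, ?_⟩
    rw [hφ]
    have h1 : x i0 = s := hx2 i0 rfl
    have h2 : y i0 = t := by simp [hyDef, hi0]
    simp [h1, h2]
  have heq := LinearEquiv.ofBijective φ ⟨hinj, hsurj⟩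
  rw [heq.finrank_eq]
  simp [Module.finrank_prod]
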